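/- Let S ⊆ ℝ≥0^n and u ∈ ℝ≥0^n. Then u ∈ span(S) if and only if for each j ∈ supp(u) there exists x ∈ S with j ∈ supp(x) such that x(j) ≤ u(j) (componentwise). -/

import Mathlib

open scoped NNReal

/-- The max-algebraic span of `S`: all vectors `⨆_{x ∈ S} λ_x • x` where only
finitely many coefficients `λ_x` are nonzero (`MaxSpan ∅ = {0}`). -/
def MaxSpan {n : ℕ} (S : Set (Fin n → ℝ≥0)) : Set (Fin n → ℝ≥0) :=
  {u | ∃ (F : Finset (Fin n → ℝ≥0)) (lam : (Fin n → ℝ≥0) → ℝ≥0),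
    ↑F ⊆ S ∧ u = F.sup (fun x => lam x • x)}

/-- A max cone: a subset of `ℝ≥0ⁿ` closed under pointwise max `⊔` and under
multiplication by nonnegative scalars. -/
def MaxCone {n : ℕ} (K : Set (Fin n → ℝ≥0)) : Prop :=
  0 ∈ K ∧ (∀ x ∈ K, ∀ y ∈ K, x ⊔ y ∈ K) ∧ (∀ (c : ℝ≥0), ∀ x ∈ K, c • x ∈ K)

/-- `u` is an extremal in `K` if `u = v ⊔ w` with `v, w ∈ K` implies `u = v` or `u = w`. -/
def IsExtremal {n : ℕ} (K : Set (Fin n → ℝ≥0)) (u : Fin n → ℝ≥0) : Prop :=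
  u ∈ K ∧ ∀ v ∈ K, ∀ w ∈ K, u = v ⊔ w → u = v ∨ u = w

/-- A vector is scaled if its max norm `⨆ i, x i` equals `1`. -/
def Scaled {n : ℕ} (x : Fin n → ℝ≥0) : Prop := (⨆ i, x i) = 1

/-- The support of a vector. -/
def supp {n : ℕ} (v : Fin n → ℝ≥0) : Set (Fin n) := {j | 0 < v j}

/-- For `j ∈ supp u`, `rescale u j = (1 / u j) • u`, the `j`-scaling `u(j)`. -/
noncomputable def rescale {n : ℕ} (u : Fin n → ℝ≥0) (j : Fin n) : Fin n → ℝ≥0 :=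
  (u j)⁻¹ • u

/-- `T(j) = {u(j) : u ∈ T, j ∈ supp u}`. -/
noncomputable def setScale {n : ℕ} (T : Set (Fin n → ℝ≥0)) (j : Fin n) :
    Set (Fin n → ℝ≥0) :=
  {y | ∃ u ∈ T, j ∈ supp u ∧ y = rescale u j}

/-- `u` is minimal in `T` if `v ∈ T` and `v ≤ u` imply `v = u`. -/
def MinimalIn {n : ℕ} (T : Set (Fin n → ℝ≥0)) (u : Fin n → ℝ≥0) : Prop :=
  u ∈ T ∧ ∀ v ∈ T, v ≤ u → v = u

/-- A set is totally dependent if each of its elements is a max combination of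
the remaining ones. -/
def TotallyDependent {n : ℕ} (S : Set (Fin n → ℝ≥0)) : Prop :=
  ∀ x ∈ S, x ∈ MaxSpan (S \ {x})

/-- A set is independent if none of its elements is a max combination of
the remaining ones. -/
def IndependentSet {n : ℕ} (S : Set (Fin n → ℝ≥0)) : Prop :=
  ∀ x ∈ S, x ∉ MaxSpan (S \ {x})

/-- A basis for `K` is an independent set of generators for `K`. -/
def IsBasis {n : ℕ} (S K : Set (Fin n → ℝ≥0)) : Prop :=
  IndependentSet S ∧ MaxSpan S = K

/-- `u ∈ span(S)` iff for each `j ∈ supp(u)` there is `x ∈ S` with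
`j ∈ supp(x)` and `x(j) ≤ u(j)` componentwise. -/
theorem stmt0 {n : ℕ} (S : Set (Fin n → ℝ≥0)) (u : Fin n → ℝ≥0) :
    u ∈ MaxSpan S ↔
      ∀ j ∈ supp u, ∃ x ∈ S, j ∈ supp x ∧ rescale x j ≤ rescale u j := by
  classical
  constructor
  · rintro ⟨F, lam, hFS, rfl⟩ j hj
    set f := fun x : Fin n → ℝ≥0 => lam x • x with hf
    have hne : F.Nonempty := by
      rcases F.eq_empty_or_nonempty with h | h
      · exfalso; have := hj; simp [supp, h] at this
      · exact h
    obtain ⟨x, hxF, hx⟩ := Finset.exists_mem_eq_sup F hne (fun x => f x j)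
    have huj : (F.sup f) j = lam x * x j := by
      rw [Finset.sup_apply, hx]; rfl
    have hpos : 0 < lam x * x j := huj ▸ hj
    have hxj : 0 < x j := by
      rcases eq_zero_or_pos (x j) with h | h
      · simp [h] at hpos
      · exact h
    have hlx : 0 < lam x := by
      rcases eq_zero_or_pos (lam x) with h | h
      · simp [h] at hpos
      · exact h
    refine ⟨x, hFS hxF, hxj, fun i => ?_⟩
    have hterm : lam x * x i ≤ (F.sup f) i := by
      rw [Finset.sup_apply]
      exact Finset.le_sup (f := fun x => f x i) hxF
    show (x j)⁻¹ * x i ≤ ((F.sup f) j)⁻¹ * (F.sup f) i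
    rw [huj]
    rw [mul_inv, mul_assoc]
    have h1 : (x j)⁻¹ * x i = (lam x)⁻¹ * (lam x * ((x j)⁻¹ * x i)) := by
      rw [← mul_assoc, inv_mul_cancel₀ hlx.ne', one_mul]
    rw [h1]
    refine mul_le_mul_right ?_ _
    rw [mul_left_comm]
    exact mul_le_mul_right hterm _
  · intro h
    choose xx hxxS hxxsupp hxxle using h
    set g : Fin n → (Fin n → ℝ≥0) := fun j =>
      if hj : j ∈ supp u then xx j hj else 0 with hg
    have hgS : ∀ j ∈ supp u, g j ∈ S := by
      intro j hj; simp only [hg, dif_pos hj]; exact hxxS j hj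
    have hgsupp : ∀ j (hj : j ∈ supp u), 0 < g j j := by
      intro j hj; simp only [hg, dif_pos hj]; exact hxxsupp j hj
    have hgle : ∀ j (hj : j ∈ supp u), ∀ i, (g j j)⁻¹ * g j i ≤ (u j)⁻¹ * u i := by
      intro j hj i; simp only [hg, dif_pos hj]; exact hxxle j hj i
    set T : Finset (Fin n) := Finset.univ.filter (fun j => 0 < u j) with hT
    set F : Finset (Fin n → ℝ≥0) := T.image g with hF
    set lam : (Fin n → ℝ≥0) → ℝ≥0 := fun x =>
      (Finset.univ.filter (fun j => 0 < u j ∧ g j = x)).sup (fun j => u j * (x j)⁻¹) with hlam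
    refine ⟨F, lam, ?_, ?_⟩
    · intro x hx
      simp only [hF, Finset.coe_image, Set.mem_image, Finset.mem_coe] at hx
      obtain ⟨j, hj, rfl⟩ := hx
      rw [hT, Finset.mem_filter] at hj
      exact hgS j hj.2
    · funext i
      apply le_antisymm
      · rcases eq_zero_or_pos (u i) with hui | hui
        · rw [hui]; exact zero_le
        · have hiT : i ∈ T := by rw [hT, Finset.mem_filter]; exact ⟨Finset.mem_univ _, hui⟩
          have hgiF : g i ∈ F := Finset.mem_image_of_mem g hiT
          have h1 : u i * ((g i) i)⁻¹ ≤ lam (g i) := by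
            refine Finset.le_sup (f := fun j => u j * ((g i) j)⁻¹) ?_
            rw [Finset.mem_filter]
            exact ⟨Finset.mem_univ _, hui, rfl⟩
          have h2 : lam (g i) * (g i) i ≤ (F.sup (fun x => lam x • x)) i := by
            rw [Finset.sup_apply]
            exact Finset.le_sup (f := fun x => (lam x • x) i) hgiF
          refine le_trans ?_ h2
          have hgi : 0 < (g i) i := hgsupp i hui
          calc u i = u i * ((g i) i)⁻¹ * (g i) i := by
                rw [mul_assoc, inv_mul_cancel₀ hgi.ne', mul_one]
            _ ≤ lam (g i) * (g i) i := mul_le_mul_left h1 _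
      · rw [Finset.sup_apply]
        apply Finset.sup_le
        intro x hxF
        show lam x * x i ≤ u i
        rcases (Finset.univ.filter (fun j => 0 < u j ∧ g j = x)).eq_empty_or_nonempty
          with he | hne
        · rw [hlam]; simp only [he, Finset.sup_empty]
          simp
        · obtain ⟨k, hk, hke⟩ := Finset.exists_mem_eq_sup _ hne
            (fun j => u j * (x j)⁻¹)
          rw [Finset.mem_filter] at hk
          obtain ⟨-, huk, hgk⟩ := hk
          have hlamx : lam x = u k * (x k)⁻¹ := hke
          rw [hlamx]
          have hxk : 0 < x k := by rw [← hgk]; exact hgsupp k huk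
          have hle := hgle k huk i
          rw [hgk] at hle
          calc u k * (x k)⁻¹ * x i = u k * ((x k)⁻¹ * x i) := by rw [mul_assoc]
            _ ≤ u k * ((u k)⁻¹ * u i) := mul_le_mul_right hle _
            _ = u i := by rw [← mul_assoc, mul_inv_cancel₀ huk.ne', one_mul]
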